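/- Let X₁ ~ Beta(α₁, β₁) and X₂ ~ Beta(α₂, β₂) be independent with positive integer parameters. Then P(X₁ > X₂) = ∑_{i=0}^{α₁−1} B(α₂+i, β₁+β₂) / ((β₁+i) B(1+i, β₁) B(α₂, β₂)), where B denotes the Beta function. -/

import Mathlib

open MeasureTheory Real

/-- The Beta function `B(a,b) = Γ(a)Γ(b)/Γ(a+b)` at natural-number arguments. -/
noncomputable def betaFun (a b : ℕ) : ℝ :=
  Real.Gamma a * Real.Gamma b / Real.Gamma (a + b)

/-- Density of a Beta(a, b) random variable with positive integer parameters. -/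
noncomputable def betaDensity (a b : ℕ) (x : ℝ) : ℝ :=
  x ^ (a - 1) * (1 - x) ^ (b - 1) / betaFun a b

lemma factR_pos (n : ℕ) : (0:ℝ) < n.factorial := by exact_mod_cast n.factorial_pos

lemma betaFun_succ (a b : ℕ) :
    betaFun (a+1) (b+1) = (a.factorial * b.factorial : ℝ) / (a + b + 1).factorial := by
  rw [betaFun]
  push_cast
  rw [show ((a:ℝ)+1)+((b:ℝ)+1) = ((a+b+1 : ℕ) : ℝ)+1 by push_cast; ring,
    show ((a:ℝ)+1) = ((a:ℕ):ℝ)+1 from rfl, show ((b:ℝ)+1) = ((b:ℕ):ℝ)+1 from rfl,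
    Real.Gamma_nat_eq_factorial, Real.Gamma_nat_eq_factorial, Real.Gamma_nat_eq_factorial]

lemma betaDensity_succ (a b : ℕ) (x : ℝ) :
    betaDensity (a+1) (b+1) x
      = x ^ a * (1 - x) ^ b * ((a + b + 1).factorial / (a.factorial * b.factorial)) := by
  rw [betaDensity, betaFun_succ]
  simp only [Nat.add_sub_cancel]
  rw [div_div_eq_mul_div, mul_div_assoc]

lemma betaDensity_zero (b : ℕ) (x : ℝ) : betaDensity 0 b x = 0 := by
  simp [betaDensity, betaFun, Real.Gamma_zero]

lemma betaDensity_continuous (a b : ℕ) : Continuous (betaDensity a b) := by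
  unfold betaDensity
  exact ((continuous_pow _).mul ((continuous_const.sub continuous_id).pow _)).div_const _

lemma integral_pow_mul_one_sub_pow (m n : ℕ) :
    ∫ x in (0:ℝ)..1, x ^ m * (1 - x) ^ n
      = (m.factorial * n.factorial : ℝ) / (m + n + 1).factorial := by
  induction n generalizing m with
  | zero =>
    simp only [pow_zero, mul_one, integral_pow, Nat.factorial_zero, Nat.add_zero]
    rw [Nat.factorial_succ]
    push_cast
    rw [one_pow, zero_pow (by omega)]
    have hm : ((m:ℝ)+1) ≠ 0 := by positivity
    have h2 : (0:ℝ) < (m.factorial : ℝ) := factR_pos m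
    field_simp
    norm_num
  | succ n ih =>
    have hu : ∀ x ∈ Set.uIcc (0:ℝ) 1, HasDerivAt (fun y : ℝ => (1-y)^(n+1))
        (-(((n:ℝ)+1) * (1-x)^n)) x := by
      intro x _
      have h1 : HasDerivAt (fun y : ℝ => 1 - y) (-1) x := (hasDerivAt_id x).const_sub 1
      have := h1.fun_pow (n+1)
      simpa using this
    have hv : ∀ x ∈ Set.uIcc (0:ℝ) 1, HasDerivAt (fun y : ℝ => y^(m+1)/(m+1))
        (x^m) x := by
      intro x _
      have := (hasDerivAt_pow (m+1) x).div_const (m+1)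
      have h2 : ((m:ℝ)+1) * x ^ m / ((m:ℝ)+1) = x ^ m := by
        field_simp
      simpa [h2] using this
    have hui : IntervalIntegrable (fun x : ℝ => -(((n:ℝ)+1) * (1-x)^n)) volume 0 1 :=
      ((continuous_const.mul ((continuous_const.sub continuous_id).pow n)).neg).intervalIntegrable 0 1
    have hvi : IntervalIntegrable (fun x : ℝ => x ^ m) volume 0 1 :=
      (continuous_pow m).intervalIntegrable 0 1
    have key := intervalIntegral.integral_mul_deriv_eq_deriv_mul hu hv hui hvi
    have comm : (∫ x in (0:ℝ)..1, x ^ m * (1 - x) ^ (n+1))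
        = ∫ x in (0:ℝ)..1, (1-x)^(n+1) * x ^ m := by
      apply intervalIntegral.integral_congr; intro x _; ring
    rw [comm, key]
    have e2 : (∫ x in (0:ℝ)..1, -(((n:ℝ)+1) * (1-x)^n) * (x^(m+1)/(m+1)))
        = (-((n:ℝ)+1)/(m+1)) * ∫ x in (0:ℝ)..1, x^(m+1) * (1-x)^n := by
      rw [← intervalIntegral.integral_const_mul]
      apply intervalIntegral.integral_congr; intro x _; ring
    rw [e2, ih]
    push_cast [Nat.factorial_succ]
    rw [show m+1+n = m+(n+1) by omega]
    rw [one_pow, zero_pow (by omega : m+1 ≠ 0)]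
    have h1 : (0:ℝ) < ((m+(n+1)).factorial : ℝ) := factR_pos _
    have hm : ((m:ℝ)+1) ≠ 0 := by positivity
    field_simp
    ring

lemma my_deriv_eq (b n : ℕ) (x : ℝ) :
    -((((n+b).factorial : ℝ) / (n.factorial * b.factorial)) *
        ((n : ℝ) * x ^ (n-1) * (1-x)^(b+1) + x ^ n * (((b:ℝ)+1) * (1-x)^b * (-1))))
      = betaDensity (n+1) (b+1) x - betaDensity n (b+1) x := by
  have hb : (0:ℝ) < (b.factorial : ℝ) := factR_pos b
  cases n with
  | zero =>
    rw [betaDensity_zero, betaDensity_succ]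
    simp only [Nat.cast_zero, zero_mul, pow_zero, zero_add, sub_zero, one_mul]
    rw [Nat.factorial_succ]
    push_cast
    field_simp
  | succ m =>
    rw [betaDensity_succ, betaDensity_succ]
    have h1 : (0:ℝ) < ((m+b).factorial : ℝ) := factR_pos _
    have h2 : (0:ℝ) < (m.factorial : ℝ) := factR_pos _
    rw [pow_succ (1-x) b, pow_succ x m, show m+1+b = m+b+1 by omega,
      Nat.factorial_succ (m+b+1), Nat.factorial_succ (m+b), Nat.factorial_succ m]
    simp only [Nat.add_sub_cancel]
    push_cast
    field_simp
    ring

lemma my_step (a b c n : ℕ) :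
    (∫ x in (0:ℝ)..1,
        (betaDensity (n+1) (b+1) x - betaDensity n (b+1) x) *
          ∫ y in (0:ℝ)..x, betaDensity (a+1) (c+1) y)
      = betaFun ((a+1) + n) ((b+1) + (c+1)) /
          ((((b+1:ℕ):ℝ) + n) * betaFun (1 + n) (b+1) * betaFun (a+1) (c+1)) := by
  have hf₂c : Continuous (betaDensity (a+1) (c+1)) := betaDensity_continuous _ _
  set F : ℝ → ℝ := fun x => ∫ y in (0:ℝ)..x, betaDensity (a+1) (c+1) y with hF
  have hFd : ∀ x : ℝ, HasDerivAt F (betaDensity (a+1) (c+1) x) x := fun x =>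
    intervalIntegral.integral_hasDerivAt_right (hf₂c.intervalIntegrable _ _)
      hf₂c.stronglyMeasurable.stronglyMeasurableAtFilter hf₂c.continuousAt
  set k : ℝ := ((n+b).factorial : ℝ) / (n.factorial * b.factorial) with hk
  have hVd : ∀ x : ℝ, HasDerivAt (fun y : ℝ => -(k * (y ^ n * (1-y)^(b+1))))
      (betaDensity (n+1) (b+1) x - betaDensity n (b+1) x) x := by
    intro x
    have h1 : HasDerivAt (fun y : ℝ => 1 - y) (-1) x := (hasDerivAt_id x).const_sub 1
    have hp := (hasDerivAt_pow n x).mul (h1.pow (b+1))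
    have h3 := (hp.const_mul k).fun_neg
    rw [← my_deriv_eq b n x]
    simpa [hk] using h3
  have hdiffc : Continuous fun x : ℝ => betaDensity (n+1) (b+1) x - betaDensity n (b+1) x :=
    (betaDensity_continuous _ _).sub (betaDensity_continuous _ _)
  have key := intervalIntegral.integral_mul_deriv_eq_deriv_mul
    (u := F) (v := fun y : ℝ => -(k * (y ^ n * (1-y)^(b+1))))
    (u' := betaDensity (a+1) (c+1))
    (v' := fun x => betaDensity (n+1) (b+1) x - betaDensity n (b+1) x)
    (a := 0) (b := 1)
    (fun x _ => hFd x) (fun x _ => hVd x)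
    (hf₂c.intervalIntegrable 0 1) (hdiffc.intervalIntegrable 0 1)
  have comm : (∫ x in (0:ℝ)..1,
      (betaDensity (n+1) (b+1) x - betaDensity n (b+1) x) * F x)
      = ∫ x in (0:ℝ)..1, F x * (betaDensity (n+1) (b+1) x - betaDensity n (b+1) x) := by
    apply intervalIntegral.integral_congr; intro x _; ring
  have hF0 : F 0 = 0 := intervalIntegral.integral_same
  have e3 : (∫ x in (0:ℝ)..1, betaDensity (a+1) (c+1) x * -(k * (x ^ n * (1-x)^(b+1))))
      = -((k * ((a+c+1).factorial / (a.factorial * c.factorial))) *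
          ∫ x in (0:ℝ)..1, x^(a+n) * (1-x)^(c+(b+1))) := by
    rw [← intervalIntegral.integral_const_mul, ← intervalIntegral.integral_neg]
    apply intervalIntegral.integral_congr; intro x _
    dsimp only
    rw [betaDensity_succ, pow_add, pow_add]
    ring
  beta_reduce at key
  show (∫ x in (0:ℝ)..1,
      (betaDensity (n+1) (b+1) x - betaDensity n (b+1) x) * F x) = _
  rw [comm, key, e3, integral_pow_mul_one_sub_pow, hF0]
  rw [show (a+1) + n = (a+n)+1 by omega, show (b+1)+(c+1) = (b+c+1)+1 by omega,
    show 1+n = n+1 by omega, betaFun_succ, betaFun_succ, betaFun_succ]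
  rw [show c+(b+1) = b+c+1 by omega]
  simp only [sub_self, zero_pow (by omega : b+1 ≠ 0), one_pow, mul_zero, zero_mul, sub_zero,
    zero_sub, neg_neg, mul_one]
  rw [hk, Nat.factorial_succ (n+b)]
  have h1 : (0:ℝ) < ((n+b).factorial : ℝ) := factR_pos _
  have h2 : (0:ℝ) < (n.factorial : ℝ) := factR_pos _
  have h3 : (0:ℝ) < (b.factorial : ℝ) := factR_pos _
  have h4 : (0:ℝ) < (a.factorial : ℝ) := factR_pos _
  have h5 : (0:ℝ) < (c.factorial : ℝ) := factR_pos _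
  have h6 : (0:ℝ) < ((a+c+1).factorial : ℝ) := factR_pos _
  have h7 : (0:ℝ) < ((b+c+1).factorial : ℝ) := factR_pos _
  have h8 : (0:ℝ) < ((a+n).factorial : ℝ) := factR_pos _
  have h9 : (0:ℝ) < ((a+n+(b+c+1)+1).factorial : ℝ) := factR_pos _
  have h10 : (0:ℝ) < ((b:ℝ)+1) + n := by positivity
  push_cast
  field_simp
  ring

lemma my_main (b a c : ℕ) (α₁ : ℕ) :
    (∫ x in (0:ℝ)..1, betaDensity α₁ (b+1) x * ∫ y in (0:ℝ)..x, betaDensity (a+1) (c+1) y)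
      = ∑ i ∈ Finset.range α₁,
          betaFun ((a+1) + i) ((b+1) + (c+1)) /
            ((((b+1:ℕ):ℝ) + i) * betaFun (1 + i) (b+1) * betaFun (a+1) (c+1)) := by
  induction α₁ with
  | zero => simp [betaDensity_zero]
  | succ n ih =>
    have hf₂c : Continuous (betaDensity (a+1) (c+1)) := betaDensity_continuous _ _
    have hFc : Continuous fun x : ℝ => ∫ y in (0:ℝ)..x, betaDensity (a+1) (c+1) y :=
      continuous_iff_continuousAt.mpr fun x =>
        (intervalIntegral.integral_hasDerivAt_right (hf₂c.intervalIntegrable _ _)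
          hf₂c.stronglyMeasurable.stronglyMeasurableAtFilter hf₂c.continuousAt).continuousAt
    have i2 : IntervalIntegrable
        (fun x : ℝ => betaDensity n (b+1) x * ∫ y in (0:ℝ)..x, betaDensity (a+1) (c+1) y)
        volume 0 1 := ((betaDensity_continuous _ _).mul hFc).intervalIntegrable 0 1
    have i3 : IntervalIntegrable
        (fun x : ℝ => (betaDensity (n+1) (b+1) x - betaDensity n (b+1) x) *
          ∫ y in (0:ℝ)..x, betaDensity (a+1) (c+1) y) volume 0 1 :=
      (((betaDensity_continuous _ _).sub (betaDensity_continuous _ _)).mul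
        hFc).intervalIntegrable 0 1
    have split : (∫ x in (0:ℝ)..1,
        betaDensity (n+1) (b+1) x * ∫ y in (0:ℝ)..x, betaDensity (a+1) (c+1) y)
        = (∫ x in (0:ℝ)..1,
            betaDensity n (b+1) x * ∫ y in (0:ℝ)..x, betaDensity (a+1) (c+1) y)
          + ∫ x in (0:ℝ)..1, (betaDensity (n+1) (b+1) x - betaDensity n (b+1) x) *
              ∫ y in (0:ℝ)..x, betaDensity (a+1) (c+1) y := by
      rw [← intervalIntegral.integral_add i2 i3]
      apply intervalIntegral.integral_congr; intro x _; ring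
    rw [split, ih, my_step, Finset.sum_range_succ]

/-- Closed form for `P(X₁ > X₂)` for independent Beta random variables with
positive integer parameters (Eq. (30) of the paper). -/
theorem prob_beta_gt_beta (α₁ β₁ α₂ β₂ : ℕ)
    (hα₁ : 0 < α₁) (hβ₁ : 0 < β₁) (hα₂ : 0 < α₂) (hβ₂ : 0 < β₂) :
    (∫ x in (0:ℝ)..1, betaDensity α₁ β₁ x * ∫ y in (0:ℝ)..x, betaDensity α₂ β₂ y)
      = ∑ i ∈ Finset.range α₁,
          betaFun (α₂ + i) (β₁ + β₂) /
            (((β₁ : ℝ) + i) * betaFun (1 + i) β₁ * betaFun α₂ β₂) := by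

  obtain ⟨b, rfl⟩ : ∃ b, β₁ = b + 1 := ⟨β₁ - 1, by omega⟩
  obtain ⟨a, rfl⟩ : ∃ a, α₂ = a + 1 := ⟨α₂ - 1, by omega⟩
  obtain ⟨c, rfl⟩ : ∃ c, β₂ = c + 1 := ⟨β₂ - 1, by omega⟩
  exact my_main b a c α₁
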